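/- Let a, b, c, d : ℝ → ℝ be differentiable functions satisfying the Riccati system (R) on all of ℝ. Then b(t) − c(t) ≠ 0 for every t ∈ ℝ; in fact b − c has constant sign on ℝ (it is everywhere positive or everywhere negative). -/

import Mathlib

/-- For differentiable functions `a, b, c, d : ℝ → ℝ` satisfying the Riccati system
`a' = 1 + a² + bc`, `d' = 1 + d² + bc`, `b' = b(a+d)`, `c' = c(a+d)` on all of `ℝ`,
the function `b − c` never vanishes; in fact it has constant sign on `ℝ`. -/
theorem riccati_b_sub_c_ne_zero_and_constant_sign
    (a b c d : ℝ → ℝ)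
    (ha : Differentiable ℝ a) (hb : Differentiable ℝ b)
    (hc : Differentiable ℝ c) (hd : Differentiable ℝ d)
    (hA : ∀ t, deriv a t = 1 + (a t) ^ 2 + b t * c t)
    (hD : ∀ t, deriv d t = 1 + (d t) ^ 2 + b t * c t)
    (hB : ∀ t, deriv b t = b t * (a t + d t))
    (hC : ∀ t, deriv c t = c t * (a t + d t)) :
    (∀ t : ℝ, b t - c t ≠ 0) ∧
      ((∀ t : ℝ, 0 < b t - c t) ∨ (∀ t : ℝ, b t - c t < 0)) := by
  have had : Continuous (fun t => a t + d t) := (ha.continuous.add hd.continuous)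
  set G : ℝ → ℝ := fun t => ∫ s in (0:ℝ)..t, (a s + d s) with hGdef
  have hG : ∀ t, HasDerivAt G (a t + d t) t := by
    intro t
    exact intervalIntegral.integral_hasDerivAt_right
      (had.intervalIntegrable _ _) (had.stronglyMeasurableAtFilter _ _) had.continuousAt
  have hG0 : G 0 = 0 := intervalIntegral.integral_same
  -- F = (b - c) * exp (-G) is constant
  set F : ℝ → ℝ := fun t => (b t - c t) * Real.exp (-(G t)) with hFdef
  have hF : ∀ t, HasDerivAt F 0 t := by
    intro t
    have h1 : HasDerivAt (fun t => b t - c t) (deriv b t - deriv c t) t :=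
      ((hb t).hasDerivAt).sub ((hc t).hasDerivAt)
    have h2 : HasDerivAt (fun t => Real.exp (-(G t))) (Real.exp (-(G t)) * (-(a t + d t))) t :=
      by have := (Real.hasDerivAt_exp (-(G t))).comp t ((hG t).neg); exact this
    have := h1.mul h2
    refine this.congr_deriv ?_
    rw [hB, hC]
    ring
  have hFconst : ∀ t, F t = b 0 - c 0 := by
    intro t
    have := is_const_of_deriv_eq_zero (f := F)
      (fun t => (hF t).differentiableAt) (fun t => (hF t).deriv) t 0
    simpa [hFdef, hG0] using this
  have hkey : ∀ t, b t - c t = (b 0 - c 0) * Real.exp (G t) := by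
    intro t
    have h := hFconst t
    rw [← h, mul_assoc, ← Real.exp_add]
    simp
  -- b 0 ≠ c 0
  have hne : b 0 - c 0 ≠ 0 := by
    intro h0
    have hbc : ∀ t, b t = c t := by
      intro t
      have := hkey t
      rw [h0] at this
      linarith [this]
    -- then deriv a t ≥ 1 + a t ^ 2, leading to arctan contradiction
    have hda : ∀ t, 1 + a t ^ 2 ≤ deriv a t := by
      intro t
      have := hA t
      rw [hbc t] at this
      nlinarith [sq_nonneg (c t)]
    set k : ℝ → ℝ := fun t => Real.arctan (a t) - t with hkdef
    have hk : ∀ t, HasDerivAt k (deriv a t / (1 + a t ^ 2) - 1) t := by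
      intro t
      have h1 : HasDerivAt (fun t => Real.arctan (a t)) (1 / (1 + a t ^ 2) * deriv a t) t :=
        (Real.hasDerivAt_arctan (a t)).comp t (ha t).hasDerivAt
      have h2 := h1.sub (hasDerivAt_id t)
      refine h2.congr_deriv ?_
      ring
    have hpos : ∀ t : ℝ, (0:ℝ) < 1 + a t ^ 2 := fun t => by positivity
    have hmono : Monotone k := by
      apply monotone_of_deriv_nonneg
      · exact fun t => (hk t).differentiableAt
      · intro t
        rw [(hk t).deriv]
        rw [sub_nonneg, le_div_iff₀ (hpos t)]
        simpa using hda t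
    have h1 : k 0 ≤ k Real.pi := hmono Real.pi_pos.le
    have h2 := Real.arctan_lt_pi_div_two (a Real.pi)
    have h3 := Real.neg_pi_div_two_lt_arctan (a 0)
    simp only [hkdef] at h1
    linarith [Real.pi_gt_three]
  refine ⟨fun t => ?_, ?_⟩
  · rw [hkey t]
    exact mul_ne_zero hne (Real.exp_ne_zero _)
  · rcases hne.lt_or_gt with h | h
    · right
      intro t
      rw [hkey t]
      exact mul_neg_of_neg_of_pos h (Real.exp_pos _)
    · left
      intro t
      rw [hkey t]
      exact mul_pos h (Real.exp_pos _)
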